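/- The vector (1,1,1,1,1) ∈ ℤ[i]⁵ does not lie in the ℤ[i]-span of the columns of K̄, but the vector (2,2,2,2,2) does lie in that span; hence the class of (1,1,1,1,1) is the unique element of order 2 in the quotient group ℤ[i]⁵ / (ℤ[i]-span of the columns of K̄). -/
import Mathlib


open Matrix

/-- The 5×5 integer matrix `D` with `D j k = 1` if `j = k`, `-1` if `j - k ≡ ±1 (mod 5)`,
and `0` otherwise. -/
def Dmat : Matrix (Fin 5) (Fin 5) ℤ := fun j k =>
  if j = k then 1
  else if (j : ZMod 5) - (k : ZMod 5) = 1 ∨ (j : ZMod 5) - (k : ZMod 5) = -1 then -1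
  else 0

/-- The Gaussian integer `i`. -/
def gi : GaussianInt := ⟨0, 1⟩

/-- `K̄ = I₅ + i • D`, a symmetric 5×5 matrix over the Gaussian integers:
`1 + i` on the diagonal, `-i` in positions with `j - k ≡ ±1 (mod 5)`, `0` elsewhere. -/
noncomputable def Kbar : Matrix (Fin 5) (Fin 5) GaussianInt :=
  1 + gi • (Dmat.map (Int.cast : ℤ → GaussianInt))

def Kmat : Matrix (Fin 5) (Fin 5) GaussianInt :=
  !![⟨1,1⟩,⟨0,-1⟩,0,0,⟨0,-1⟩; ⟨0,-1⟩,⟨1,1⟩,⟨0,-1⟩,0,0; 0,⟨0,-1⟩,⟨1,1⟩,⟨0,-1⟩,0;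
     0,0,⟨0,-1⟩,⟨1,1⟩,⟨0,-1⟩; ⟨0,-1⟩,0,0,⟨0,-1⟩,⟨1,1⟩]

def Umat : Matrix (Fin 5) (Fin 5) GaussianInt :=
  !![1,0,0,0,0; ⟨1,-1⟩,1,0,0,0; ⟨-1,-2⟩,⟨1,-1⟩,1,0,0;
     ⟨-4,0⟩,⟨-1,-2⟩,⟨1,-1⟩,1,0; ⟨1,-2⟩,1,⟨0,1⟩,⟨0,1⟩,1]

def Uinv : Matrix (Fin 5) (Fin 5) GaussianInt :=
  !![1,0,0,0,0; ⟨-1,1⟩,1,0,0,0; 1,⟨-1,1⟩,1,0,0;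
     0,1,⟨-1,1⟩,1,0; 0,0,1,⟨0,-1⟩,1]

def Vmat : Matrix (Fin 5) (Fin 5) GaussianInt :=
  !![0,0,0,0,1; 1,0,0,-1,⟨0,1⟩; 0,1,0,⟨-1,1⟩,⟨0,1⟩;
     0,0,1,⟨1,2⟩,1; 0,0,0,1,⟨1,-2⟩]

def Vinv : Matrix (Fin 5) (Fin 5) GaussianInt :=
  !![⟨-1,1⟩,1,0,0,1; ⟨1,2⟩,0,1,0,⟨1,-1⟩; ⟨4,0⟩,0,0,1,⟨-1,-2⟩;
     ⟨-1,2⟩,0,0,0,1; 1,0,0,0,0]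

def Smat : Matrix (Fin 5) (Fin 5) GaussianInt :=
  !![⟨0,-1⟩,0,0,0,0; 0,⟨0,-1⟩,0,0,0; 0,0,⟨0,-1⟩,0,0; 0,0,0,⟨0,3⟩,0; 0,0,0,0,⟨3,-3⟩]

lemma hKbar : Kbar = Kmat := by
  funext i j
  fin_cases i <;> fin_cases j <;>
    simp [Kbar, Kmat, Dmat, gi, Matrix.one_apply] <;> decide

lemma hUK : Umat * Kmat = Smat * Vinv := by decide
lemma hKV : Kmat * Vmat = Uinv * Smat := by decide
lemma hU'U : Uinv * Umat = 1 := by decide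

lemma hS (w : Fin 5 → GaussianInt) :
    Smat.mulVec w = ![⟨0,-1⟩*w 0, ⟨0,-1⟩*w 1, ⟨0,-1⟩*w 2, ⟨0,3⟩*w 3, ⟨3,-3⟩*w 4] := by
  funext i
  fin_cases i <;>
    simp [Smat, Matrix.mulVec, dotProduct, Fin.sum_univ_five]

lemma mem_iff (y : Fin 5 → GaussianInt) :
    y ∈ LinearMap.range Kbar.mulVecLin ↔
      ((⟨0,3⟩ : GaussianInt) ∣ Umat.mulVec y 3 ∧
       (⟨3,-3⟩ : GaussianInt) ∣ Umat.mulVec y 4) := by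
  constructor
  · rintro ⟨x, rfl⟩
    rw [Matrix.mulVecLin_apply, hKbar]
    rw [show Umat.mulVec (Kmat.mulVec x) = Smat.mulVec (Vinv.mulVec x) by
      rw [Matrix.mulVec_mulVec, Matrix.mulVec_mulVec, hUK]]
    rw [hS]
    exact ⟨⟨_, rfl⟩, ⟨_, rfl⟩⟩
  · rintro ⟨⟨c, hc⟩, ⟨d, hd⟩⟩
    have hw : Smat.mulVec (![⟨0,1⟩ * Umat.mulVec y 0, ⟨0,1⟩ * Umat.mulVec y 1,
        ⟨0,1⟩ * Umat.mulVec y 2, c, d]) = Umat.mulVec y := by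
      rw [hS]
      funext i
      fin_cases i
      · simp [← mul_assoc]
        rw [show ((⟨0,-1⟩:GaussianInt) * ⟨0,1⟩) = 1 by decide, one_mul]
      · simp [← mul_assoc]
        rw [show ((⟨0,-1⟩:GaussianInt) * ⟨0,1⟩) = 1 by decide, one_mul]
      · simp [← mul_assoc]
        rw [show ((⟨0,-1⟩:GaussianInt) * ⟨0,1⟩) = 1 by decide, one_mul]
      · simpa using hc.symm
      · simpa using hd.symm
    refine ⟨Vmat.mulVec (![⟨0,1⟩ * Umat.mulVec y 0, ⟨0,1⟩ * Umat.mulVec y 1,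
      ⟨0,1⟩ * Umat.mulVec y 2, c, d]), ?_⟩
    rw [Matrix.mulVecLin_apply, hKbar, Matrix.mulVec_mulVec, hKV,
      ← Matrix.mulVec_mulVec, hw, Matrix.mulVec_mulVec, hU'U, Matrix.one_mulVec]

lemma lemA (a : GaussianInt) (h : (⟨0,3⟩ : GaussianInt) ∣ 2 * a) :
    (⟨0,3⟩ : GaussianInt) ∣ a := by
  obtain ⟨z, hz⟩ := h
  have h1 := congrArg Zsqrtd.re hz
  have h2 := congrArg Zsqrtd.im hz
  simp [Zsqrtd.re_mul, Zsqrtd.im_mul] at h1 h2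
  refine ⟨⟨a.im / 3, -(a.re / 3)⟩, ?_⟩
  rw [Zsqrtd.ext_iff]
  simp [Zsqrtd.re_mul, Zsqrtd.im_mul]
  constructor <;> omega

lemma lemB (b : GaussianInt) (h2 : (⟨3,-3⟩ : GaussianInt) ∣ 2 * b)
    (h1 : ¬ (⟨3,-3⟩ : GaussianInt) ∣ b) : (⟨3,-3⟩ : GaussianInt) ∣ (b - 3) := by
  obtain ⟨z, hz⟩ := h2
  have e1 := congrArg Zsqrtd.re hz
  have e2 := congrArg Zsqrtd.im hz
  simp [Zsqrtd.re_mul, Zsqrtd.im_mul] at e1 e2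
  rcases Int.even_or_odd (b.re / 3 + b.im / 3) with ⟨k, hk⟩ | ⟨k, hk⟩
  · exfalso
    apply h1
    refine ⟨⟨(b.re / 3 - b.im / 3) / 2, (b.re / 3 + b.im / 3) / 2⟩, ?_⟩
    rw [Zsqrtd.ext_iff]
    simp [Zsqrtd.re_mul, Zsqrtd.im_mul]
    constructor <;> omega
  · refine ⟨⟨(b.re / 3 - 1 - b.im / 3) / 2, (b.re / 3 - 1 + b.im / 3) / 2⟩, ?_⟩
    rw [Zsqrtd.ext_iff]
    have h3re : ((3:GaussianInt)).re = 3 := by decide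
    have h3im : ((3:GaussianInt)).im = 0 := by decide
    simp [Zsqrtd.re_mul, Zsqrtd.im_mul, h3re, h3im]
    constructor <;> omega

lemma hU1 : Umat.mulVec (fun _ => (1:GaussianInt)) 3 = ⟨-3,-3⟩ ∧
    Umat.mulVec (fun _ => (1:GaussianInt)) 4 = ⟨3,0⟩ := by decide

lemma notMem_one : (fun _ => (1 : GaussianInt)) ∉ LinearMap.range Kbar.mulVecLin := by
  rw [mem_iff]
  rintro ⟨-, h⟩
  rw [hU1.2] at h
  obtain ⟨z, hz⟩ := h
  have h1 := congrArg Zsqrtd.re hz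
  have h2 := congrArg Zsqrtd.im hz
  simp [Zsqrtd.re_mul, Zsqrtd.im_mul] at h1 h2
  omega

lemma mem_two : (fun _ => (2 : GaussianInt)) ∈ LinearMap.range Kbar.mulVecLin := by
  rw [mem_iff]
  constructor
  · exact ⟨⟨-2,2⟩, by decide⟩
  · exact ⟨⟨1,1⟩, by decide⟩

/-- `(1,1,1,1,1)` is not in the ℤ[i]-span of the columns of `K̄`, while
`(2,2,2,2,2)` is; hence the class of `(1,1,1,1,1)` is the unique element of order 2 in
the quotient group. -/
theorem stmt_7 :
    (fun _ => (1 : GaussianInt)) ∉ LinearMap.range Kbar.mulVecLin ∧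
    (fun _ => (2 : GaussianInt)) ∈ LinearMap.range Kbar.mulVecLin ∧
    ∀ x : (Fin 5 → GaussianInt) ⧸ LinearMap.range Kbar.mulVecLin,
      addOrderOf x = 2 ↔
        x = Submodule.Quotient.mk (fun _ => (1 : GaussianInt)) := by
  refine ⟨notMem_one, mem_two, ?_⟩
  intro x
  have key2 : (2:ℕ) • (Submodule.Quotient.mk (fun _ => (1 : GaussianInt)) :
      (Fin 5 → GaussianInt) ⧸ LinearMap.range Kbar.mulVecLin) = 0 := by
    have h2 : (((2:ℕ):GaussianInt)) • (fun _ => (1:GaussianInt)) = (fun _ : Fin 5 => (2:GaussianInt)) := by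
      funext i
      simp
    rw [← Nat.cast_smul_eq_nsmul GaussianInt, ← Submodule.Quotient.mk_smul, h2,
      Submodule.Quotient.mk_eq_zero]
    exact mem_two
  constructor
  · intro h
    obtain ⟨y, rfl⟩ := Submodule.Quotient.mk_surjective _ x
    have hne : (Submodule.Quotient.mk y : (Fin 5 → GaussianInt) ⧸ LinearMap.range Kbar.mulVecLin) ≠ 0 := by
      intro h0
      rw [h0] at h
      simp at h
    have hy_not : y ∉ LinearMap.range Kbar.mulVecLin := by
      rwa [Ne, Submodule.Quotient.mk_eq_zero] at hne
    have h2y : (2:GaussianInt) • y ∈ LinearMap.range Kbar.mulVecLin := by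
      rw [← Submodule.Quotient.mk_eq_zero, Submodule.Quotient.mk_smul,
        show (2:GaussianInt) = ((2:ℕ):GaussianInt) from by norm_cast,
        Nat.cast_smul_eq_nsmul GaussianInt, ← h]
      exact addOrderOf_nsmul_eq_zero _
    rw [mem_iff] at h2y
    rw [Matrix.mulVec_smul] at h2y
    have h2y3 : (⟨0,3⟩ : GaussianInt) ∣ 2 * Umat.mulVec y 3 := h2y.1
    have h2y4 : (⟨3,-3⟩ : GaussianInt) ∣ 2 * Umat.mulVec y 4 := h2y.2
    have ha : (⟨0,3⟩ : GaussianInt) ∣ Umat.mulVec y 3 := lemA _ h2y3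
    have hb : ¬ (⟨3,-3⟩ : GaussianInt) ∣ Umat.mulVec y 4 := by
      intro hb'
      exact hy_not ((mem_iff y).2 ⟨ha, hb'⟩)
    rw [Submodule.Quotient.eq]
    rw [mem_iff, Matrix.mulVec_sub]
    constructor
    · simp only [Pi.sub_apply, hU1.1]
      have : (⟨0,3⟩ : GaussianInt) ∣ ⟨-3,-3⟩ := ⟨⟨-1,1⟩, by decide⟩
      exact dvd_sub ha this
    · simp only [Pi.sub_apply, hU1.2]
      have h3 : (⟨3,0⟩ : GaussianInt) = 3 := by decide
      rw [h3]
      exact lemB _ h2y4 hb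
  · rintro rfl
    have : Fact (Nat.Prime 2) := ⟨Nat.prime_two⟩
    apply addOrderOf_eq_prime key2
    rw [Ne, Submodule.Quotient.mk_eq_zero]
    exact notMem_one
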